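/- Every eigenvector of the reduced Hamiltonian H on ℂ^{2n} (tridiagonal, entries 1 except √2 between sites n and n+1) that is of the form ψ_j = sin(pj) for 1 ≤ j ≤ n and ψ_j = ± sin(p(2n+1−j)) for n+1 ≤ j ≤ 2n, with p ∈ (0,π), has eigenvalue 2cos p, and the eigenvalue equation at sites n and n+1 holds if and only if sin((n+1)p)/sin(np) = ±√2 (with matching sign, assuming sin(np) ≠ 0). -/
import Mathlib


/-- Eigenstates of the reduced glued-trees Hamiltonian on sites `1,…,2n` (convention
`ψ_0 = ψ_{2n+1} = 0`): the ansatz `ψ_j = sin(pj)` for `j ≤ n`, `ψ_j = s·sin(p(2n+1−j))`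
for `j ≥ n+1` (`s = ±1`) satisfies the eigenvalue equation with eigenvalue `2 cos p` at
all sites `j ∉ {n, n+1}`, and the equations at sites `n` and `n+1` (where the matrix
element is `√2`) hold if and only if `sin((n+1)p)/sin(np) = s√2`. -/
theorem reduced_hamiltonian_eigenstates (n : ℕ) (hn : 1 ≤ n) (p : ℝ)
    (hp : 0 < p) (hp' : p < Real.pi) (s : ℝ) (hs : s = 1 ∨ s = -1)
    (hsin : Real.sin ((n : ℝ) * p) ≠ 0)
    (ψ : ℕ → ℝ)
    (hψ : ∀ j, ψ j = if j ≤ n then Real.sin (p * j)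
      else s * Real.sin (p * ((2 * n + 1 - j : ℕ) : ℝ))) :
    (∀ j, 1 ≤ j → j ≤ 2 * n → j ≠ n → j ≠ n + 1 →
        ψ (j - 1) + ψ (j + 1) = 2 * Real.cos p * ψ j)
    ∧ ((ψ (n - 1) + Real.sqrt 2 * ψ (n + 1) = 2 * Real.cos p * ψ n
          ∧ Real.sqrt 2 * ψ n + ψ (n + 2) = 2 * Real.cos p * ψ (n + 1))
        ↔ Real.sin (((n : ℝ) + 1) * p) / Real.sin ((n : ℝ) * p) = s * Real.sqrt 2) := by
  have hs2 : s * s = 1 := by rcases hs with h | h <;> simp [h]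
  have key : ∀ x y : ℝ, Real.sin (x + y) + Real.sin (x - y) = 2 * Real.cos y * Real.sin x := by
    intro x y; rw [Real.sin_add, Real.sin_sub]; ring
  constructor
  · intro j h1 h2 hne hne'
    rcases lt_or_gt_of_ne hne with hlt | hgt
    · rw [hψ (j - 1), hψ (j + 1), hψ j, if_pos (by omega : j - 1 ≤ n),
        if_pos (by omega : j + 1 ≤ n), if_pos (by omega : j ≤ n),
        Nat.cast_sub h1, Nat.cast_add, Nat.cast_one, mul_sub, mul_add, mul_one]
      linear_combination key (p * (j : ℝ)) p
    · have h3 : 2 * n + 1 - (j - 1) = (2 * n + 1 - j) + 1 := by omega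
      have h4 : 2 * n + 1 - (j + 1) = (2 * n + 1 - j) - 1 := by omega
      rw [hψ (j - 1), hψ (j + 1), hψ j, if_neg (by omega : ¬ j - 1 ≤ n),
        if_neg (by omega : ¬ j + 1 ≤ n), if_neg (by omega : ¬ j ≤ n), h3, h4,
        Nat.cast_add, Nat.cast_one, Nat.cast_sub (by omega : 1 ≤ 2 * n + 1 - j),
        Nat.cast_one, mul_add, mul_sub, mul_one]
      linear_combination s * key (p * ((2 * n + 1 - j : ℕ) : ℝ)) p
  · have c1 : ((n - 1 : ℕ) : ℝ) = (n : ℝ) - 1 := by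
      rw [Nat.cast_sub hn, Nat.cast_one]
    have eψn : ψ n = Real.sin (p * n) := by rw [hψ]; simp
    have eψm : ψ (n - 1) = Real.sin (p * n - p) := by
      rw [hψ, if_pos (Nat.sub_le n 1), c1, mul_sub, mul_one]
    have eψp1 : ψ (n + 1) = s * Real.sin (p * n) := by
      have h : 2 * n + 1 - (n + 1) = n := by omega
      rw [hψ, if_neg (by omega : ¬ n + 1 ≤ n), h]
    have eψp2 : ψ (n + 2) = s * Real.sin (p * n - p) := by
      have h : 2 * n + 1 - (n + 2) = n - 1 := by omega
      rw [hψ, if_neg (by omega : ¬ n + 2 ≤ n), h, c1, mul_sub, mul_one]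
    rw [eψn, eψm, eψp1, eψp2, div_eq_iff hsin,
      show ((n : ℝ) + 1) * p = p * n + p from by ring, mul_comm (n : ℝ) p]
    have hkey := key (p * (n : ℝ)) p
    constructor
    · rintro ⟨hA, hB⟩
      linear_combination hkey - hA
    · intro h
      constructor
      · linear_combination hkey - h
      · linear_combination s * hkey - s * h - Real.sqrt 2 * Real.sin (p * (n : ℝ)) * hs2
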